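/- Let K ⊂ ℂ be compact, let Q : K → ℝ be lower semicontinuous (write w = e^{-Q}), and let ν be a finite Borel measure on K such that (K, ν, Q) satisfies the weighted Bernstein–Markov property. For k ≥ 1 set Z_k := ∫_{K^{k+1}} |VDM_k(z_0,…,z_k)|² e^{-2kQ(z_0)}⋯e^{-2kQ(z_k)} dν(z_0)⋯dν(z_k), where VDM_k(z_0,…,z_k) = ∏_{0 ≤ i < j ≤ k}(z_j − z_i), and set δ_k^Q(K) := (max_{z_0,…,z_k ∈ K} |VDM_k(z_0,…,z_k)| e^{-kQ(z_0)}⋯e^{-kQ(z_k)})^{2/(k(k+1))}. If δ_k^Q(K) → L as k → ∞ for some L ≥ 0, then Z_k^{1/k²} → L as k → ∞. -/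

import Mathlib

open MeasureTheory Filter Polynomial Set
open scoped ENNReal

/-- `(K, ν, Q)` satisfies the weighted Bernstein–Markov property (with `w = e^{-Q}`). -/
def WeightedBernsteinMarkov (K : Set ℂ) (ν : Measure ℂ) (Q : ℂ → ℝ) : Prop :=
  ∀ ε : ℝ, 0 < ε → ∃ C : ℝ, 0 < C ∧ ∀ k : ℕ, 1 ≤ k → ∀ p : Polynomial ℂ,
    p.natDegree ≤ k → ∀ z ∈ K,
      ‖p.eval z‖ * Real.exp (-Q z) ^ k ≤
        C * (1 + ε) ^ k *
          Real.sqrt (∫ w in K, ‖p.eval w‖ ^ 2 * Real.exp (-Q w) ^ (2 * k) ∂ν)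

/-- The classical Vandermonde determinant `VDM_k(z_0,…,z_k) = ∏_{i<j} (z_j - z_i)`. -/
noncomputable def VDM (k : ℕ) (z : Fin (k + 1) → ℂ) : ℂ :=
  ∏ i : Fin (k + 1), ∏ j ∈ Finset.Ioi i, (z j - z i)

/-- `Z_k = ∫_{K^{k+1}} |VDM_k(z_0,…,z_k)|² e^{-2kQ(z_0)}⋯e^{-2kQ(z_k)} dν(z_0)⋯dν(z_k)`. -/
noncomputable def ZkQ (K : Set ℂ) (ν : Measure ℂ) (Q : ℂ → ℝ) (k : ℕ) : ℝ :=
  ∫ z in {z : Fin (k + 1) → ℂ | ∀ i, z i ∈ K},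
    ‖VDM k z‖ ^ 2 * ∏ i : Fin (k + 1), Real.exp (-(2 * (k : ℝ)) * Q (z i))
    ∂(Measure.pi fun _ : Fin (k + 1) => ν)

/-- The weighted `k`-th order diameter
`δ_k^Q(K) = (max_{z_0,…,z_k ∈ K} |VDM_k(z_0,…,z_k)| e^{-kQ(z_0)}⋯e^{-kQ(z_k)})^{2/(k(k+1))}`. -/
noncomputable def deltakQ (K : Set ℂ) (Q : ℂ → ℝ) (k : ℕ) : ℝ :=
  (sSup ((fun z : Fin (k + 1) → ℂ =>
      ‖VDM k z‖ * ∏ i : Fin (k + 1), Real.exp (-(k : ℝ) * Q (z i))) ''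
    {z : Fin (k + 1) → ℂ | ∀ i, z i ∈ K})) ^ ((2 : ℝ) / ((k : ℝ) * ((k : ℝ) + 1)))

lemma lsc_bddBelow {X : Type*} [TopologicalSpace X] [CompactSpace X] (f : X → ℝ)
    (hf : LowerSemicontinuous f) : ∃ m : ℝ, ∀ x, m ≤ f x := by
  rcases isEmpty_or_nonempty X with h | h
  · exact ⟨0, fun x => absurd (Nonempty.intro x) (not_nonempty_iff.2 h)⟩
  · obtain ⟨t, ht⟩ := isCompact_univ.elim_finite_subcover
      (fun y : X => f ⁻¹' Set.Ioi (f y - 1)) (fun y => hf.isOpen_preimage _)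
      (fun x _ => Set.mem_iUnion.2 ⟨x, by simp⟩)
    rcases t.eq_empty_or_nonempty with rfl | hne
    · simpa using ht (Set.mem_univ h.some)
    · refine ⟨t.inf' hne f - 1, fun x => ?_⟩
      obtain ⟨y, hyt, hy⟩ := Set.mem_iUnion₂.1 (ht (Set.mem_univ x))
      have : t.inf' hne f ≤ f y := Finset.inf'_le _ hyt
      have hy' : f y - 1 < f x := hy
      linarith

lemma exists_nice_Q (K : Set ℂ) (hK : IsCompact K) (Q : ℂ → ℝ)
    (hQ : LowerSemicontinuousOn Q K) :
    ∃ Q' : ℂ → ℝ, Measurable Q' ∧ (∀ x ∈ K, Q' x = Q x) ∧ ∃ m : ℝ, ∀ x, m ≤ Q' x := by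
  have hres : LowerSemicontinuous (K.restrict Q) := by
    intro x y hy
    have h := hQ x x.2 y hy
    rwa [← map_nhds_subtype_val x] at h
  have : CompactSpace K := isCompact_iff_compactSpace.1 hK
  obtain ⟨m, hm⟩ := lsc_bddBelow _ hres
  have hmeas : Measurable (K.restrict Q) := hres.measurable
  set Q' : ℂ → ℝ := Function.extend (Subtype.val : K → ℂ) (K.restrict Q) (fun _ => m)
  have hemb : MeasurableEmbedding (Subtype.val : K → ℂ) :=
    MeasurableEmbedding.subtype_coe hK.isClosed.measurableSet
  refine ⟨Q', hemb.measurable_extend hmeas measurable_const, fun x hx => ?_, m, fun x => ?_⟩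
  · have := Subtype.val_injective.extend_apply (K.restrict Q) (fun _ => m) ⟨x, hx⟩
    exact this
  · by_cases hx : x ∈ K
    · have h1 := Subtype.val_injective.extend_apply (K.restrict Q) (fun _ => m) ⟨x, hx⟩
      have h2 := hm ⟨x, hx⟩
      simp only [Q', h1]
      exact h2
    · have h1 : Q' x = m := by
        simp only [Q']
        rw [Function.extend_apply']
        rintro ⟨y, rfl⟩
        exact hx y.2
      simp [h1]

noncomputable def VDMpoly (k : ℕ) (z : Fin (k + 1) → ℂ) (j : Fin (k + 1)) : Polynomial ℂ :=
  ∏ i : Fin (k + 1), ∏ j' ∈ Finset.Ioi i,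
    ((if j' = j then X else C (z j')) - (if i = j then X else C (z i)))

lemma VDMpoly_eval (k : ℕ) (z : Fin (k + 1) → ℂ) (j : Fin (k + 1)) (x : ℂ) :
    (VDMpoly k z j).eval x = VDM k (Function.update z j x) := by
  simp only [VDMpoly, VDM, eval_prod, eval_sub, Function.update_apply]
  congr 1; ext i; congr 1; ext j'
  split_ifs <;> simp

lemma VDMpoly_natDegree (k : ℕ) (z : Fin (k + 1) → ℂ) (j : Fin (k + 1)) :
    (VDMpoly k z j).natDegree ≤ k := by
  refine le_trans (Polynomial.natDegree_prod_le _ _) ?_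
  have h1 : ∀ i : Fin (k+1),
      (∏ j' ∈ Finset.Ioi i, ((if j' = j then X else C (z j')) - (if i = j then X else C (z i)))).natDegree
        ≤ ∑ j' ∈ Finset.Ioi i, (if i = j ∨ j' = j then 1 else 0) := by
    intro i
    refine le_trans (Polynomial.natDegree_prod_le _ _) (Finset.sum_le_sum fun j' _ => ?_)
    by_cases hi : i = j <;> by_cases hj' : j' = j <;>
      simp [hi, hj', Polynomial.natDegree_X_sub_C] <;>
      · refine le_trans (Polynomial.natDegree_sub_le _ _) (by simp)
  refine le_trans (Finset.sum_le_sum fun i _ => h1 i) ?_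
  have key : ∑ i : Fin (k+1), ∑ j' ∈ Finset.Ioi i, (if i = j ∨ j' = j then (1:ℕ) else 0) = k := by
    have hsplit : ∀ i : Fin (k+1), ∑ j' ∈ Finset.Ioi i, (if i = j ∨ j' = j then (1:ℕ) else 0)
        = ∑ j' ∈ Finset.Ioi i, ((if i = j then (1:ℕ) else 0) + (if j' = j then 1 else 0)) := by
      intro i
      refine Finset.sum_congr rfl fun j' hj' => ?_
      have hlt : i < j' := Finset.mem_Ioi.1 hj'
      by_cases h1 : i = j <;> by_cases h2 : j' = j <;> simp_all <;> omega
    calc ∑ i : Fin (k+1), ∑ j' ∈ Finset.Ioi i, (if i = j ∨ j' = j then (1:ℕ) else 0)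
        = ∑ i : Fin (k+1), ((Finset.Ioi i).card • (if i = j then (1:ℕ) else 0)
            + ∑ j' ∈ Finset.Ioi i, (if j' = j then (1:ℕ) else 0)) := by
          refine Finset.sum_congr rfl fun i _ => ?_
          rw [hsplit i, Finset.sum_add_distrib, Finset.sum_const]
      _ = ∑ i : Fin (k+1), ((Finset.Ioi i).card • (if i = j then (1:ℕ) else 0))
            + ∑ i : Fin (k+1), (if j ∈ Finset.Ioi i then (1:ℕ) else 0) := by
          rw [Finset.sum_add_distrib]
          congr 1
          refine Finset.sum_congr rfl fun i _ => ?_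
          exact Finset.sum_ite_eq' (Finset.Ioi i) j (fun _ => 1)
      _ = (Finset.Ioi j).card + (Finset.Iio j).card := by
          congr 1
          · rw [Finset.sum_eq_single j] <;> simp +contextual
          · have he : ∀ i : Fin (k+1), (if j ∈ Finset.Ioi i then (1:ℕ) else 0)
                = if i ∈ Finset.Iio j then 1 else 0 := by
              intro i; simp [Finset.mem_Ioi, Finset.mem_Iio]
            rw [Finset.sum_congr rfl (fun i _ => he i), Finset.sum_ite_mem,
              Finset.univ_inter, Finset.card_eq_sum_ones]
      _ = k := by
          rw [Fin.card_Ioi, Fin.card_Iio]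
          omega
  exact le_of_eq key

lemma VDM_continuous (k : ℕ) : Continuous (VDM k) := by
  unfold VDM
  refine continuous_finset_prod _ fun i _ => continuous_finset_prod _ fun j _ => ?_
  exact (continuous_apply j).sub (continuous_apply i)

noncomputable def Gfun (Q : ℂ → ℝ) (k : ℕ) (z : Fin (k + 1) → ℂ) : ℝ≥0∞ :=
  ENNReal.ofReal (‖VDM k z‖ ^ 2 * ∏ i : Fin (k + 1), Real.exp (-(2 * (k : ℝ)) * Q (z i)))

lemma Gfun_measurable (Q : ℂ → ℝ) (hQm : Measurable Q) (k : ℕ) : Measurable (Gfun Q k) := by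
  apply ENNReal.measurable_ofReal.comp
  apply Measurable.mul
  · exact (((VDM_continuous k).norm).measurable).pow_const 2
  · exact Finset.measurable_prod _ fun i _ =>
      (Real.measurable_exp.comp ((measurable_const.mul (hQm.comp (measurable_pi_apply i)))))

lemma BM_step (K : Set ℂ) (ν : Measure ℂ) [IsFiniteMeasure ν] (hKc : IsCompact K) (hν : ν Kᶜ = 0)
    (Q : ℂ → ℝ) (hQm : Measurable Q) (m : ℝ) (hm : ∀ x, m ≤ Q x)
    (k : ℕ) (D : ℝ) (hD : 0 < D)
    (hBMk : ∀ p : Polynomial ℂ, p.natDegree ≤ k → ∀ x ∈ K,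
      ‖p.eval x‖ * Real.exp (-Q x) ^ k ≤
        D * Real.sqrt (∫ w in K, ‖p.eval w‖ ^ 2 * Real.exp (-Q w) ^ (2 * k) ∂ν))
    (z : Fin (k + 1) → ℂ) (hz : ∀ i, z i ∈ K) (j : Fin (k + 1)) :
    Gfun Q k z ≤ ENNReal.ofReal (D ^ 2) * ∫⁻ x, Gfun Q k (Function.update z j x) ∂ν := by
  have hKm : MeasurableSet K := hKc.isClosed.measurableSet
  have haeK : ∀ᵐ x ∂ν, x ∈ K := by
    rw [ae_iff]; exact hν
  have hrestr : ν.restrict K = ν := Measure.restrict_eq_self_of_ae_mem haeK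
  set p := VDMpoly k z j with hp
  have eid : ∀ x : ℂ, Real.exp (-Q x) ^ (2 * k) = Real.exp (-(2 * (k : ℝ)) * Q x) := by
    intro x; rw [← Real.exp_nat_mul]; push_cast; ring_nf
  set f0 : ℂ → ℝ := fun w => ‖p.eval w‖ ^ 2 * Real.exp (-(2 * (k : ℝ)) * Q w) with hf0
  have hf0nn : ∀ w, 0 ≤ f0 w := fun w => by positivity
  have hf0meas : Measurable f0 :=
    ((p.continuous.norm.measurable).pow_const 2).mul
      (Real.measurable_exp.comp (measurable_const.mul hQm))
  obtain ⟨Mp, hMp⟩ := hKc.exists_bound_of_continuousOn (p.continuous.continuousOn)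
  have hint : Integrable f0 (ν.restrict K) := by
    refine Integrable.mono' (integrable_const ((Mp ^ 2) * Real.exp (-(2 * (k : ℝ)) * m)))
      hf0meas.aestronglyMeasurable ?_
    filter_upwards [ae_restrict_mem hKm] with w hw
    rw [Real.norm_of_nonneg (hf0nn w)]
    have h1 : ‖p.eval w‖ ≤ Mp := hMp w hw
    have h2 : Real.exp (-(2 * (k : ℝ)) * Q w) ≤ Real.exp (-(2 * (k : ℝ)) * m) := by
      apply Real.exp_le_exp.2
      have := hm w
      nlinarith [Nat.cast_nonneg (α := ℝ) k]
    have h3 : (0:ℝ) ≤ ‖p.eval w‖ := norm_nonneg _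
    have h4 : ‖p.eval w‖ ^ 2 ≤ Mp ^ 2 := by nlinarith
    have h5 := mul_le_mul h4 h2 (Real.exp_pos _).le (by nlinarith)
    exact h5
  set I : ℝ := ∫ w in K, f0 w ∂ν with hI
  have hInn : 0 ≤ I := integral_nonneg fun w => hf0nn w
  have hIeq : (∫ w in K, ‖p.eval w‖ ^ 2 * Real.exp (-Q w) ^ (2 * k) ∂ν) = I := by
    refine integral_congr_ae (ae_of_all _ fun w => ?_)
    simp only [hf0]
    rw [eid w]
  have hBM := hBMk p (VDMpoly_natDegree k z j) (z j) (hz j)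
  rw [hIeq] at hBM
  -- squared version
  have key : ‖p.eval (z j)‖ ^ 2 * Real.exp (-(2 * (k : ℝ)) * Q (z j)) ≤ D ^ 2 * I := by
    rw [← eid]
    have hnn : (0:ℝ) ≤ ‖p.eval (z j)‖ * Real.exp (-Q (z j)) ^ k := by positivity
    have h2 := mul_self_le_mul_self hnn hBM
    calc ‖p.eval (z j)‖ ^ 2 * Real.exp (-Q (z j)) ^ (2 * k)
        = (‖p.eval (z j)‖ * Real.exp (-Q (z j)) ^ k) * (‖p.eval (z j)‖ * Real.exp (-Q (z j)) ^ k) := by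
          rw [two_mul, pow_add]; ring
      _ ≤ (D * Real.sqrt I) * (D * Real.sqrt I) := h2
      _ = D ^ 2 * (Real.sqrt I * Real.sqrt I) := by ring
      _ = D ^ 2 * I := by rw [Real.mul_self_sqrt hInn]
  -- lintegral form of I
  have hIlin : ENNReal.ofReal I = ∫⁻ x, ENNReal.ofReal (f0 x) ∂ν := by
    rw [hI, ofReal_integral_eq_lintegral_ofReal hint (ae_of_all _ fun w => hf0nn w), hrestr]
  -- decomposition
  set R : ℝ := ∏ i ∈ Finset.univ.erase j, Real.exp (-(2 * (k : ℝ)) * Q (z i)) with hRdef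
  have hRnn : 0 ≤ R := Finset.prod_nonneg fun i _ => (Real.exp_pos _).le
  have hGz : Gfun Q k z
      = ENNReal.ofReal ((‖p.eval (z j)‖ ^ 2 * Real.exp (-(2 * (k : ℝ)) * Q (z j))) * R) := by
    unfold Gfun
    congr 1
    rw [← Finset.mul_prod_erase _ _ (Finset.mem_univ j), ← hRdef]
    have : p.eval (z j) = VDM k z := by
      rw [hp, VDMpoly_eval, Function.update_eq_self]
    rw [this]; ring
  have hGu : ∀ x : ℂ, Gfun Q k (Function.update z j x) = ENNReal.ofReal (f0 x * R) := by
    intro x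
    unfold Gfun
    congr 1
    rw [← Finset.mul_prod_erase _ _ (Finset.mem_univ j)]
    have h1 : VDM k (Function.update z j x) = p.eval x := (VDMpoly_eval k z j x).symm
    have h2 : Function.update z j x j = x := Function.update_self j x z
    have h3 : (∏ i ∈ Finset.univ.erase j, Real.exp (-(2 * (k : ℝ)) * Q (Function.update z j x i))) = R := by
      refine Finset.prod_congr rfl fun i hi => ?_
      rw [Function.update_of_ne (Finset.ne_of_mem_erase hi)]
    rw [h1, h2, h3, hf0]; ring
  calc Gfun Q k z
      = ENNReal.ofReal ((‖p.eval (z j)‖ ^ 2 * Real.exp (-(2 * (k : ℝ)) * Q (z j))) * R) := hGz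
    _ ≤ ENNReal.ofReal ((D ^ 2 * I) * R) :=
        ENNReal.ofReal_le_ofReal (mul_le_mul_of_nonneg_right key hRnn)
    _ = ENNReal.ofReal (D ^ 2) * (ENNReal.ofReal I * ENNReal.ofReal R) := by
        rw [ENNReal.ofReal_mul (by positivity), ENNReal.ofReal_mul (sq_nonneg D), mul_assoc]
    _ = ENNReal.ofReal (D ^ 2) * ∫⁻ x, Gfun Q k (Function.update z j x) ∂ν := by
        congr 1
        rw [hIlin, ← lintegral_mul_const _ hf0meas.ennreal_ofReal]
        refine (lintegral_congr fun x => ?_).symm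
        rw [hGu x, ENNReal.ofReal_mul (hf0nn x)]

lemma BM_induction (K : Set ℂ) (ν : Measure ℂ) [IsFiniteMeasure ν] (hKc : IsCompact K)
    (hν : ν Kᶜ = 0) (Q : ℂ → ℝ) (hQm : Measurable Q) (m : ℝ) (hm : ∀ x, m ≤ Q x)
    (k : ℕ) (D : ℝ) (hD : 0 < D)
    (hBMk : ∀ p : Polynomial ℂ, p.natDegree ≤ k → ∀ x ∈ K,
      ‖p.eval x‖ * Real.exp (-Q x) ^ k ≤
        D * Real.sqrt (∫ w in K, ‖p.eval w‖ ^ 2 * Real.exp (-Q w) ^ (2 * k) ∂ν))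
    (s : Finset (Fin (k + 1))) :
    ∀ z : Fin (k + 1) → ℂ, (∀ i, z i ∈ K) →
      Gfun Q k z ≤ ENNReal.ofReal (D ^ 2) ^ s.card *
        MeasureTheory.lmarginal (fun _ : Fin (k + 1) => ν) s (Gfun Q k) z := by
  have haeK : ∀ᵐ x ∂ν, x ∈ K := by rw [ae_iff]; exact hν
  have hGm : Measurable (Gfun Q k) := Gfun_measurable Q hQm k
  induction s using Finset.induction_on with
  | empty => intro z hz; simp [MeasureTheory.lmarginal_empty]
  | insert j s hj ih =>
    intro z hz
    have h1 := BM_step K ν hKc hν Q hQm m hm k D hD hBMk z hz j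
    have h2 : (∫⁻ x, Gfun Q k (Function.update z j x) ∂ν) ≤
        ∫⁻ x, ENNReal.ofReal (D ^ 2) ^ s.card *
          MeasureTheory.lmarginal (fun _ : Fin (k + 1) => ν) s (Gfun Q k)
            (Function.update z j x) ∂ν := by
      refine lintegral_mono_ae ?_
      filter_upwards [haeK] with x hx
      refine ih (Function.update z j x) fun i => ?_
      rcases eq_or_ne i j with rfl | hne
      · simpa [Function.update_self] using hx
      · simpa [Function.update_of_ne hne] using hz i
    calc Gfun Q k z ≤ ENNReal.ofReal (D ^ 2) * ∫⁻ x, Gfun Q k (Function.update z j x) ∂ν := h1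
      _ ≤ ENNReal.ofReal (D ^ 2) * ∫⁻ x, ENNReal.ofReal (D ^ 2) ^ s.card *
            MeasureTheory.lmarginal (fun _ : Fin (k + 1) => ν) s (Gfun Q k)
              (Function.update z j x) ∂ν := by
          exact mul_le_mul_right h2 _
      _ = ENNReal.ofReal (D ^ 2) ^ (insert j s).card *
            MeasureTheory.lmarginal (fun _ : Fin (k + 1) => ν) (insert j s) (Gfun Q k) z := by
          have hmeas : Measurable fun x : ℂ =>
              MeasureTheory.lmarginal (fun _ : Fin (k + 1) => ν) s (Gfun Q k)
                (Function.update z j x) :=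
            (Measurable.lmarginal _ hGm).comp (measurable_update z)
          rw [MeasureTheory.lmarginal_insert _ hGm hj, Finset.card_insert_of_notMem hj,
            lintegral_const_mul _ hmeas]
          ring


noncomputable def Ffun (Q : ℂ → ℝ) (k : ℕ) (z : Fin (k + 1) → ℂ) : ℝ :=
  ‖VDM k z‖ * ∏ i : Fin (k + 1), Real.exp (-(k : ℝ) * Q (z i))

lemma Gfun_eq_sq (Q : ℂ → ℝ) (k : ℕ) (z : Fin (k + 1) → ℂ) :
    Gfun Q k z = ENNReal.ofReal (Ffun Q k z ^ 2) := by
  unfold Gfun Ffun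
  congr 1
  rw [mul_pow, ← Finset.prod_pow]
  congr 1
  refine Finset.prod_congr rfl fun i _ => ?_
  rw [← Real.exp_nat_mul]
  push_cast
  ring_nf

lemma pi_compl_null (K : Set ℂ) (hKm : MeasurableSet K) (ν : Measure ℂ) [IsFiniteMeasure ν]
    (hν : ν Kᶜ = 0) (k : ℕ) :
    (Measure.pi fun _ : Fin (k + 1) => ν) {z : Fin (k + 1) → ℂ | ∀ i, z i ∈ K}ᶜ = 0 := by
  have h1 : {z : Fin (k + 1) → ℂ | ∀ i, z i ∈ K}ᶜ
      = ⋃ i, Function.eval i ⁻¹' Kᶜ := by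
    ext z; simp [Function.eval, not_forall]
  rw [h1]
  exact measure_iUnion_null fun i => Measure.pi_eval_preimage_null _ hν

lemma ZkQ_eq_toReal (K : Set ℂ) (hKm : MeasurableSet K) (ν : Measure ℂ) [IsFiniteMeasure ν]
    (hν : ν Kᶜ = 0) (Q : ℂ → ℝ) (hQm : Measurable Q) (k : ℕ) :
    ZkQ K ν Q k = (∫⁻ z, Gfun Q k z ∂(Measure.pi fun _ : Fin (k + 1) => ν)).toReal := by
  have hpin := pi_compl_null K hKm ν hν k
  have hae : ∀ᵐ z ∂(Measure.pi fun _ : Fin (k + 1) => ν),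
      z ∈ {z : Fin (k + 1) → ℂ | ∀ i, z i ∈ K} := by
    rw [ae_iff]
    exact hpin
  have hrestr : (Measure.pi fun _ : Fin (k + 1) => ν).restrict
      {z : Fin (k + 1) → ℂ | ∀ i, z i ∈ K} = Measure.pi fun _ : Fin (k + 1) => ν :=
    Measure.restrict_eq_self_of_ae_mem hae
  have hmeas : Measurable fun z : Fin (k + 1) → ℂ =>
      ‖VDM k z‖ ^ 2 * ∏ i : Fin (k + 1), Real.exp (-(2 * (k : ℝ)) * Q (z i)) := by
    apply Measurable.mul
    · exact ((VDM_continuous k).norm.measurable).pow_const 2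
    · exact Finset.measurable_prod _ fun i _ =>
        Real.measurable_exp.comp (measurable_const.mul (hQm.comp (measurable_pi_apply i)))
  unfold ZkQ
  rw [hrestr]
  rw [integral_eq_lintegral_of_nonneg_ae (ae_of_all _ fun z => by positivity)
    hmeas.aestronglyMeasurable]
  rfl

lemma Ffun_bound (K : Set ℂ) (hKc : IsCompact K) (Q : ℂ → ℝ) (m : ℝ) (hm : ∀ x, m ≤ Q x)
    (k : ℕ) : ∃ B : ℝ, 0 ≤ B ∧ ∀ z : Fin (k + 1) → ℂ, (∀ i, z i ∈ K) → Ffun Q k z ≤ B := by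
  obtain ⟨R, hR⟩ := hKc.isBounded.subset_closedBall 0
  set c : ℝ := max |2 * R| 1 with hc
  have hc1 : (1:ℝ) ≤ c := le_max_right _ _
  have hc0 : (0:ℝ) ≤ c := by linarith
  refine ⟨c ^ (k * (k + 1)) * Real.exp (-(k : ℝ) * m) ^ (k + 1), by positivity, ?_⟩
  intro z hz
  unfold Ffun
  have h1 : ‖VDM k z‖ ≤ c ^ (k * (k + 1)) := by
    unfold VDM
    rw [norm_prod]
    calc ∏ i : Fin (k + 1), ‖∏ j ∈ Finset.Ioi i, (z j - z i)‖
        ≤ ∏ i : Fin (k + 1), c ^ (Finset.Ioi i).card := by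
          refine Finset.prod_le_prod (fun _ _ => norm_nonneg _) fun i _ => ?_
          rw [norm_prod, ← Finset.prod_const]
          refine Finset.prod_le_prod (fun _ _ => norm_nonneg _) fun j _ => ?_
          have hzj := hR (hz j); have hzi := hR (hz i)
          simp only [Metric.mem_closedBall, dist_zero_right] at hzj hzi
          have habs := le_abs_self (2 * R)
          have hle : ‖z j - z i‖ ≤ |2 * R| := by
            calc ‖z j - z i‖ ≤ ‖z j‖ + ‖z i‖ := norm_sub_le _ _
              _ ≤ |2 * R| := by linarith
          exact hle.trans (le_max_left _ _)
      _ = c ^ (∑ i : Fin (k + 1), (Finset.Ioi i).card) := by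
          rw [← Finset.prod_pow_eq_pow_sum]
      _ ≤ c ^ (k * (k + 1)) := by
          refine pow_le_pow_right₀ hc1 ?_
          calc ∑ i : Fin (k + 1), (Finset.Ioi i).card
              ≤ ∑ i : Fin (k + 1), k := by
                refine Finset.sum_le_sum fun i _ => ?_
                rw [Fin.card_Ioi]; omega
            _ = (k + 1) * k := by simp [Finset.sum_const, mul_comm]
            _ ≤ k * (k + 1) := by ring_nf; omega
  have h2 : (∏ i : Fin (k + 1), Real.exp (-(k : ℝ) * Q (z i)))
      ≤ Real.exp (-(k : ℝ) * m) ^ (k + 1) := by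
    have hcard : Real.exp (-(k : ℝ) * m) ^ (k + 1)
        = ∏ _i : Fin (k + 1), Real.exp (-(k : ℝ) * m) := by
      rw [Finset.prod_const, Finset.card_univ, Fintype.card_fin]
    rw [hcard]
    refine Finset.prod_le_prod (fun _ _ => (Real.exp_pos _).le) fun i _ => ?_
    refine Real.exp_le_exp.2 ?_
    have := hm (z i)
    nlinarith [Nat.cast_nonneg (α := ℝ) k]
  calc ‖VDM k z‖ * ∏ i : Fin (k + 1), Real.exp (-(k : ℝ) * Q (z i))
      ≤ c ^ (k * (k + 1)) * Real.exp (-(k : ℝ) * m) ^ (k + 1) :=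
        mul_le_mul h1 h2 (Finset.prod_nonneg fun _ _ => (Real.exp_pos _).le) (by positivity)

lemma Ffun_nonneg (Q : ℂ → ℝ) (k : ℕ) (z : Fin (k + 1) → ℂ) : 0 ≤ Ffun Q k z := by
  unfold Ffun
  positivity

lemma Sk_nonneg (K : Set ℂ) (Q : ℂ → ℝ) (k : ℕ) :
    0 ≤ sSup (Ffun Q k '' {z : Fin (k + 1) → ℂ | ∀ i, z i ∈ K}) := by
  apply Real.sSup_nonneg
  rintro x ⟨z, hz, rfl⟩
  exact Ffun_nonneg Q k z

lemma Lambda_le (K : Set ℂ) (hKc : IsCompact K) (ν : Measure ℂ) [IsFiniteMeasure ν]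
    (hν : ν Kᶜ = 0) (Q : ℂ → ℝ) (m : ℝ) (hm : ∀ x, m ≤ Q x) (k : ℕ) :
    (∫⁻ z, Gfun Q k z ∂(Measure.pi fun _ : Fin (k + 1) => ν)) ≤
      ENNReal.ofReal ((sSup (Ffun Q k '' {z : Fin (k + 1) → ℂ | ∀ i, z i ∈ K})) ^ 2) *
        (Measure.pi fun _ : Fin (k + 1) => ν) Set.univ := by
  obtain ⟨B, hB0, hB⟩ := Ffun_bound K hKc Q m hm k
  have hbdd : BddAbove (Ffun Q k '' {z : Fin (k + 1) → ℂ | ∀ i, z i ∈ K}) := by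
    refine ⟨B, ?_⟩
    rintro x ⟨z, hz, rfl⟩
    exact hB z hz
  set Sk := sSup (Ffun Q k '' {z : Fin (k + 1) → ℂ | ∀ i, z i ∈ K}) with hSk
  have hae : ∀ᵐ z ∂(Measure.pi fun _ : Fin (k + 1) => ν),
      z ∈ {z : Fin (k + 1) → ℂ | ∀ i, z i ∈ K} := by
    rw [ae_iff]
    exact pi_compl_null K hKc.isClosed.measurableSet ν hν k
  calc (∫⁻ z, Gfun Q k z ∂(Measure.pi fun _ : Fin (k + 1) => ν))
      ≤ ∫⁻ _z, ENNReal.ofReal (Sk ^ 2) ∂(Measure.pi fun _ : Fin (k + 1) => ν) := by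
        refine lintegral_mono_ae ?_
        filter_upwards [hae] with z hz
        rw [Gfun_eq_sq]
        refine ENNReal.ofReal_le_ofReal ?_
        have h1 : Ffun Q k z ≤ Sk := le_csSup hbdd ⟨z, hz, rfl⟩
        exact pow_le_pow_left₀ (Ffun_nonneg Q k z) h1 2
    _ = ENNReal.ofReal (Sk ^ 2) * (Measure.pi fun _ : Fin (k + 1) => ν) Set.univ := by
        rw [lintegral_const]

lemma ZkQ_nonneg' (K : Set ℂ) (hKm : MeasurableSet K) (ν : Measure ℂ) [IsFiniteMeasure ν]
    (hν : ν Kᶜ = 0) (Q : ℂ → ℝ) (hQm : Measurable Q) (k : ℕ) : 0 ≤ ZkQ K ν Q k := by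
  rw [ZkQ_eq_toReal K hKm ν hν Q hQm k]
  exact ENNReal.toReal_nonneg

lemma core_upper (K : Set ℂ) (hKc : IsCompact K) (ν : Measure ℂ) [IsFiniteMeasure ν]
    (hν : ν Kᶜ = 0) (Q : ℂ → ℝ) (hQm : Measurable Q) (m : ℝ) (hm : ∀ x, m ≤ Q x) (k : ℕ) :
    ZkQ K ν Q k ≤
      (sSup (Ffun Q k '' {z : Fin (k + 1) → ℂ | ∀ i, z i ∈ K})) ^ 2 *
        ((ν Set.univ).toReal) ^ (k + 1) := by
  have h1 := Lambda_le K hKc ν hν Q m hm k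
  rw [ZkQ_eq_toReal K hKc.isClosed.measurableSet ν hν Q hQm k]
  set Sk := sSup (Ffun Q k '' {z : Fin (k + 1) → ℂ | ∀ i, z i ∈ K}) with hSk
  have h2 : (ENNReal.ofReal (Sk ^ 2) * (Measure.pi fun _ : Fin (k + 1) => ν) Set.univ) ≠ ⊤ :=
    ENNReal.mul_ne_top ENNReal.ofReal_ne_top (measure_ne_top _ _)
  calc (∫⁻ z, Gfun Q k z ∂(Measure.pi fun _ : Fin (k + 1) => ν)).toReal
      ≤ (ENNReal.ofReal (Sk ^ 2) * (Measure.pi fun _ : Fin (k + 1) => ν) Set.univ).toReal :=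
        ENNReal.toReal_mono h2 h1
    _ = Sk ^ 2 * ((ν Set.univ).toReal) ^ (k + 1) := by
        rw [ENNReal.toReal_mul, ENNReal.toReal_ofReal (sq_nonneg _)]
        congr 1
        rw [Measure.pi_univ, ENNReal.toReal_prod, Finset.prod_const, Finset.card_univ,
          Fintype.card_fin]

lemma core_lower (K : Set ℂ) (hKc : IsCompact K) (ν : Measure ℂ) [IsFiniteMeasure ν]
    (hν : ν Kᶜ = 0) (Q : ℂ → ℝ) (hQm : Measurable Q) (m : ℝ) (hm : ∀ x, m ≤ Q x)
    (k : ℕ) (D : ℝ) (hD : 0 < D)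
    (hBMk : ∀ p : Polynomial ℂ, p.natDegree ≤ k → ∀ x ∈ K,
      ‖p.eval x‖ * Real.exp (-Q x) ^ k ≤
        D * Real.sqrt (∫ w in K, ‖p.eval w‖ ^ 2 * Real.exp (-Q w) ^ (2 * k) ∂ν)) :
    (sSup (Ffun Q k '' {z : Fin (k + 1) → ℂ | ∀ i, z i ∈ K})) ^ 2 ≤
      D ^ (2 * (k + 1)) * ZkQ K ν Q k := by
  set π : Measure (Fin (k + 1) → ℂ) := Measure.pi fun _ : Fin (k + 1) => ν with hπ
  set Λ := ∫⁻ z, Gfun Q k z ∂π with hΛ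
  have hΛfin : Λ ≠ ⊤ := by
    refine ne_top_of_le_ne_top ?_ (Lambda_le K hKc ν hν Q m hm k)
    exact ENNReal.mul_ne_top ENNReal.ofReal_ne_top (measure_ne_top _ _)
  have hZ : ZkQ K ν Q k = Λ.toReal := ZkQ_eq_toReal K hKc.isClosed.measurableSet ν hν Q hQm k
  have hZnn : 0 ≤ ZkQ K ν Q k := by rw [hZ]; exact ENNReal.toReal_nonneg
  have hRHSnn : 0 ≤ D ^ (2 * (k + 1)) * ZkQ K ν Q k := by positivity
  have key : ∀ z : Fin (k + 1) → ℂ, (∀ i, z i ∈ K) →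
      Ffun Q k z ^ 2 ≤ D ^ (2 * (k + 1)) * ZkQ K ν Q k := by
    intro z hz
    have hind := BM_induction K ν hKc hν Q hQm m hm k D hD hBMk Finset.univ z hz
    rw [MeasureTheory.lmarginal_univ, Finset.card_univ, Fintype.card_fin] at hind
    rw [Gfun_eq_sq] at hind
    have h2 : (ENNReal.ofReal (D ^ 2) ^ (k + 1) * Λ) ≠ ⊤ :=
      ENNReal.mul_ne_top (ENNReal.pow_ne_top ENNReal.ofReal_ne_top) hΛfin
    have h3 := ENNReal.toReal_mono h2 hind
    rw [ENNReal.toReal_ofReal (sq_nonneg _), ENNReal.toReal_mul, ENNReal.toReal_pow,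
      ENNReal.toReal_ofReal (sq_nonneg D)] at h3
    calc Ffun Q k z ^ 2 ≤ (D ^ 2) ^ (k + 1) * Λ.toReal := h3
      _ = D ^ (2 * (k + 1)) * ZkQ K ν Q k := by rw [← pow_mul, hZ]
  refine (pow_le_pow_left₀ (Sk_nonneg K Q k) ?_ 2).trans
    (le_of_eq (Real.sq_sqrt hRHSnn))
  refine Real.sSup_le ?_ (Real.sqrt_nonneg _)
  rintro x ⟨z, hz, rfl⟩
  rw [Real.le_sqrt (Ffun_nonneg Q k z)]
  · exact key z hz
  · exact hRHSnn

lemma rpow_calc1 (a Z Mv : ℝ) (ha : 0 ≤ a) (hZ : 0 ≤ Z) (hM : 0 ≤ Mv) (k : ℕ) (hk : 1 ≤ k)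
    (hup : Z ≤ a ^ 2 * Mv ^ (k + 1)) :
    Z ^ ((1:ℝ)/(k:ℝ)^2) ≤
      (a ^ ((2:ℝ)/((k:ℝ)*((k:ℝ)+1)))) ^ (((k:ℝ)+1)/(k:ℝ)) * Mv ^ (((k:ℝ)+1)/(k:ℝ)^2) := by
  have hkr : (0:ℝ) < (k:ℝ) := by exact_mod_cast Nat.pos_of_ne_zero (by omega)
  have h1 : Z ^ ((1:ℝ)/(k:ℝ)^2) ≤ (a ^ 2 * Mv ^ (k+1)) ^ ((1:ℝ)/(k:ℝ)^2) :=
    Real.rpow_le_rpow hZ hup (by positivity)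
  refine h1.trans (le_of_eq ?_)
  rw [Real.mul_rpow (by positivity) (by positivity)]
  congr 1
  · rw [← Real.rpow_natCast a 2, ← Real.rpow_mul ha, ← Real.rpow_mul ha]
    congr 1
    field_simp
    ring
  · rw [← Real.rpow_natCast Mv (k+1), ← Real.rpow_mul hM]
    congr 1
    push_cast
    field_simp

lemma rpow_calc2 (a Z C ε : ℝ) (ha : 0 ≤ a) (hZ : 0 ≤ Z) (hC : 0 < C) (hε : 0 < ε)
    (k : ℕ) (hk : 1 ≤ k)
    (hlow : a ^ 2 ≤ (C * (1+ε) ^ k) ^ (2 * (k + 1)) * Z) :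
    (a ^ ((2:ℝ)/((k:ℝ)*((k:ℝ)+1)))) ^ (((k:ℝ)+1)/(k:ℝ)) /
      (C ^ ((2*((k:ℝ)+1))/(k:ℝ)^2) * (1+ε) ^ ((2*((k:ℝ)+1))/(k:ℝ))) ≤
    Z ^ ((1:ℝ)/(k:ℝ)^2) := by
  have hkr : (0:ℝ) < (k:ℝ) := by exact_mod_cast Nat.pos_of_ne_zero (by omega)
  have hεp : (0:ℝ) < 1 + ε := by linarith
  have hD : (0:ℝ) < (C * (1+ε) ^ k) ^ (2 * (k + 1)) := by positivity
  have h0 : a ^ 2 / (C * (1+ε) ^ k) ^ (2 * (k + 1)) ≤ Z := by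
    rw [div_le_iff₀ hD]; linarith [hlow]
  have h1 : (a ^ 2 / (C * (1+ε) ^ k) ^ (2 * (k + 1))) ^ ((1:ℝ)/(k:ℝ)^2) ≤
      Z ^ ((1:ℝ)/(k:ℝ)^2) :=
    Real.rpow_le_rpow (by positivity) h0 (by positivity)
  refine le_trans (le_of_eq ?_) h1
  rw [Real.div_rpow (by positivity) (by positivity)]
  congr 1
  · rw [← Real.rpow_natCast a 2, ← Real.rpow_mul ha, ← Real.rpow_mul ha]
    congr 1
    field_simp
    ring
  · rw [mul_pow, ← pow_mul, ← Real.rpow_natCast C (2*(k+1)),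
      ← Real.rpow_natCast (1+ε) (k*(2*(k+1))),
      Real.mul_rpow (by positivity) (by positivity),
      ← Real.rpow_mul hC.le, ← Real.rpow_mul hεp.le]
    congr 1
    · congr 1; push_cast; field_simp
    · congr 1; push_cast; field_simp

open Polynomial in
lemma ZkQ_congr (K : Set ℂ) (hKm : MeasurableSet K) (ν : Measure ℂ) (Q Q' : ℂ → ℝ)
    (h : ∀ x ∈ K, Q x = Q' x) (k : ℕ) : ZkQ K ν Q k = ZkQ K ν Q' k := by
  unfold ZkQ
  have hS : MeasurableSet {z : Fin (k + 1) → ℂ | ∀ i, z i ∈ K} := by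
    have hs : {z : Fin (k + 1) → ℂ | ∀ i, z i ∈ K} = ⋂ i, (fun z : Fin (k+1) → ℂ => z i) ⁻¹' K := by
      ext z; simp
    rw [hs]
    exact MeasurableSet.iInter fun i => (measurable_pi_apply i) hKm
  refine setIntegral_congr_fun hS fun z hz => ?_
  congr 1
  exact Finset.prod_congr rfl fun i _ => by rw [h _ (hz i)]

lemma deltakQ_congr (K : Set ℂ) (Q Q' : ℂ → ℝ) (h : ∀ x ∈ K, Q x = Q' x) (k : ℕ) :
    deltakQ K Q k = deltakQ K Q' k := by
  unfold deltakQ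
  congr 2
  refine Set.image_congr fun z hz => ?_
  congr 1
  exact Finset.prod_congr rfl fun i _ => by rw [h _ (hz i)]

lemma deltakQ_eq_Sfn (K : Set ℂ) (Q : ℂ → ℝ) (k : ℕ) :
    deltakQ K Q k = (sSup (Ffun Q k '' {z : Fin (k + 1) → ℂ | ∀ i, z i ∈ K}))
      ^ ((2 : ℝ) / ((k : ℝ) * ((k : ℝ) + 1))) := rfl

lemma tend_inv : Tendsto (fun k : ℕ => 1 / (k : ℝ)) atTop (nhds 0) :=
  tendsto_one_div_atTop_nhds_zero_nat

lemma tend1 : Tendsto (fun k : ℕ => ((k : ℝ) + 1) / (k : ℝ)) atTop (nhds 1) := by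
  have h : Tendsto (fun k : ℕ => 1 + 1 / (k : ℝ)) atTop (nhds (1 + 0)) :=
    tendsto_const_nhds.add tend_inv
  rw [add_zero] at h
  refine h.congr' ?_
  filter_upwards [eventually_ge_atTop 1] with k hk
  have hkr : ((k : ℝ)) ≠ 0 := by
    have : 0 < (k:ℝ) := by exact_mod_cast Nat.pos_of_ne_zero (by omega)
    exact this.ne'
  field_simp

lemma tend2 : Tendsto (fun k : ℕ => ((k : ℝ) + 1) / (k : ℝ) ^ 2) atTop (nhds 0) := by
  have h : Tendsto (fun k : ℕ => (1 / (k : ℝ)) * (((k : ℝ) + 1) / (k : ℝ))) atTop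
      (nhds (0 * 1)) := tend_inv.mul tend1
  rw [zero_mul] at h
  refine h.congr fun k => by ring

lemma tend3 : Tendsto (fun k : ℕ => (2 * ((k : ℝ) + 1)) / (k : ℝ) ^ 2) atTop (nhds 0) := by
  have h : Tendsto (fun k : ℕ => 2 * (((k : ℝ) + 1) / (k : ℝ) ^ 2)) atTop (nhds (2 * 0)) :=
    tendsto_const_nhds.mul tend2
  rw [mul_zero] at h
  refine h.congr fun k => by ring

lemma tend4 : Tendsto (fun k : ℕ => (2 * ((k : ℝ) + 1)) / (k : ℝ)) atTop (nhds 2) := by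
  have h : Tendsto (fun k : ℕ => 2 * (((k : ℝ) + 1) / (k : ℝ))) atTop (nhds (2 * 1)) :=
    tendsto_const_nhds.mul tend1
  rw [mul_one] at h
  refine h.congr fun k => by ring

/-- Let `K ⊂ ℂ` be compact, `Q` lower semicontinuous on `K`, and `(K, ν, Q)` satisfy the
weighted Bernstein–Markov property.  If `δ_k^Q(K) → L ≥ 0`, then `Z_k^{1/k²} → L`. -/
theorem ZkQ_tendsto_weighted_transfinite_diameter (K : Set ℂ) (hK : IsCompact K)
    (Q : ℂ → ℝ) (hQ : LowerSemicontinuousOn Q K)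
    (ν : Measure ℂ) [IsFiniteMeasure ν] (hν : ν Kᶜ = 0)
    (hBM : WeightedBernsteinMarkov K ν Q)
    (L : ℝ) (hL : 0 ≤ L)
    (hδ : Tendsto (fun k => deltakQ K Q k) atTop (nhds L)) :
    Tendsto (fun k => ZkQ K ν Q k ^ ((1 : ℝ) / ((k : ℝ) ^ 2))) atTop (nhds L) := by
  have hKm : MeasurableSet K := hK.isClosed.measurableSet
  rcases Set.eq_empty_or_nonempty K with hKe | hne
  · -- K is empty
    subst hKe
    have hS : ∀ k : ℕ, {z : Fin (k + 1) → ℂ | ∀ i, z i ∈ (∅ : Set ℂ)} = ∅ := by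
      intro k
      ext z
      simp
    have hZ0 : ∀ k : ℕ, ZkQ ∅ ν Q k = 0 := by
      intro k
      unfold ZkQ
      rw [hS k]
      simp
    have hδ0 : ∀ k : ℕ, 1 ≤ k → deltakQ ∅ Q k = 0 := by
      intro k hk
      unfold deltakQ
      rw [hS k]
      have hkr : (0:ℝ) < (k:ℝ) := by exact_mod_cast Nat.pos_of_ne_zero (by omega)
      rw [Set.image_empty, Real.sSup_empty, Real.zero_rpow (by positivity : (2:ℝ)/((k:ℝ)*((k:ℝ)+1)) ≠ 0)]
    have hδ0' : Tendsto (fun k => deltakQ ∅ Q k) atTop (nhds 0) := by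
      refine Tendsto.congr' ?_ tendsto_const_nhds
      filter_upwards [eventually_ge_atTop 1] with k hk
      exact (hδ0 k hk).symm
    have hL0 : L = 0 := tendsto_nhds_unique hδ hδ0'
    subst hL0
    refine Tendsto.congr' ?_ tendsto_const_nhds
    filter_upwards [eventually_ge_atTop 1] with k hk
    have hkr : (0:ℝ) < (k:ℝ) := by exact_mod_cast Nat.pos_of_ne_zero (by omega)
    rw [hZ0 k, Real.zero_rpow (by positivity : (1:ℝ)/(k:ℝ)^2 ≠ 0)]
  · -- K is nonempty
    obtain ⟨Q', hQ'm, hQ'eq, m, hm⟩ := exists_nice_Q K hK Q hQ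
    have hQQ' : ∀ x ∈ K, Q x = Q' x := fun x hx => (hQ'eq x hx).symm
    have hZc : ∀ k, ZkQ K ν Q k = ZkQ K ν Q' k := fun k => ZkQ_congr K hKm ν Q Q' hQQ' k
    have hδc : ∀ k, deltakQ K Q k = deltakQ K Q' k := fun k => deltakQ_congr K Q Q' hQQ' k
    have hν0 : ν Set.univ ≠ 0 := by
      intro h0
      have hν' : ν = 0 := Measure.measure_univ_eq_zero.mp h0
      obtain ⟨C, hC, hp⟩ := hBM 1 one_pos
      obtain ⟨x, hx⟩ := hne
      have h1 := hp 1 le_rfl 1 (by simp) x hx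
      rw [hν'] at h1
      simp only [Polynomial.eval_one, norm_one, one_mul, pow_one] at h1
      rw [Measure.restrict_zero] at h1
      simp only [integral_zero_measure, Real.sqrt_zero, mul_zero] at h1
      linarith [Real.exp_pos (-Q x)]
    set M : ℝ := (ν Set.univ).toReal with hMdef
    have hM : 0 < M := ENNReal.toReal_pos hν0 (measure_ne_top _ _)
    have hZnn : ∀ k : ℕ, 0 ≤ ZkQ K ν Q k := by
      intro k
      rw [hZc k]
      exact ZkQ_nonneg' K hKm ν hν Q' hQ'm k
    have hunn : ∀ k : ℕ, 0 ≤ ZkQ K ν Q k ^ ((1 : ℝ) / ((k : ℝ) ^ 2)) :=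
      fun k => Real.rpow_nonneg (hZnn k) _
    set u : ℕ → ℝ := fun k => ZkQ K ν Q k ^ ((1 : ℝ) / ((k : ℝ) ^ 2)) with hu
    set g : ℕ → ℝ := fun k =>
      deltakQ K Q k ^ (((k : ℝ) + 1) / (k : ℝ)) * M ^ (((k : ℝ) + 1) / (k : ℝ) ^ 2) with hg
    have hub : ∀ k : ℕ, 1 ≤ k → u k ≤ g k := by
      intro k hk
      have hupper := core_upper K hK ν hν Q' hQ'm m hm k
      have hSnn := Sk_nonneg K Q' k
      have h1 := rpow_calc1 (sSup (Ffun Q' k '' {z : Fin (k + 1) → ℂ | ∀ i, z i ∈ K}))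
        (ZkQ K ν Q' k) M hSnn (by rw [← hZc k]; exact hZnn k) hM.le k hk hupper
      simp only [hu, hg]
      rw [hZc k, hδc k, deltakQ_eq_Sfn]
      exact h1
    have htg : Tendsto g atTop (nhds L) := by
      have h1 : Tendsto (fun k : ℕ => deltakQ K Q k ^ (((k : ℝ) + 1) / (k : ℝ))) atTop
          (nhds (L ^ (1:ℝ))) := hδ.rpow tend1 (Or.inr one_pos)
      have h2 : Tendsto (fun k : ℕ => M ^ (((k : ℝ) + 1) / (k : ℝ) ^ 2)) atTop
          (nhds (M ^ (0:ℝ))) := ((tendsto_const_nhds : Tendsto (fun _ : ℕ => M) atTop (nhds M)).rpow tend2 (Or.inl hM.ne'))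
      have h3 := h1.mul h2
      rw [Real.rpow_one, Real.rpow_zero, mul_one] at h3
      exact h3
    have hbddle : IsBoundedUnder (· ≤ ·) atTop u := by
      obtain ⟨b, hb⟩ := htg.isBoundedUnder_le
      refine ⟨b, ?_⟩
      rw [eventually_map] at hb ⊢
      filter_upwards [hb, eventually_ge_atTop 1] with k hbk hk
      exact (hub k hk).trans hbk
    have hbddge : IsBoundedUnder (· ≥ ·) atTop u :=
      ⟨0, eventually_map.2 (Eventually.of_forall hunn)⟩
    have hlimsup : limsup u atTop ≤ L := by
      have h1 : limsup u atTop ≤ limsup g atTop := by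
        refine limsup_le_limsup ?_ hbddge.isCobounded_flip htg.isBoundedUnder_le
        filter_upwards [eventually_ge_atTop 1] with k hk
        exact hub k hk
      rwa [htg.limsup_eq] at h1
    have hliminf : L ≤ liminf u atTop := by
      have hc : ∀ ε : ℝ, 0 < ε → L / (1 + ε) ^ (2:ℝ) ≤ liminf u atTop := by
        intro ε hε
        obtain ⟨C, hC, hp⟩ := hBM ε hε
        set h : ℕ → ℝ := fun k => deltakQ K Q k ^ (((k : ℝ) + 1) / (k : ℝ)) /
          (C ^ ((2 * ((k : ℝ) + 1)) / (k : ℝ) ^ 2) * (1 + ε) ^ ((2 * ((k : ℝ) + 1)) / (k : ℝ)))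
          with hh
        have hεp : (0:ℝ) < 1 + ε := by linarith
        have hlb : ∀ k : ℕ, 1 ≤ k → h k ≤ u k := by
          intro k hk
          have hD : (0:ℝ) < C * (1 + ε) ^ k := by positivity
          have hBMk : ∀ p : Polynomial ℂ, p.natDegree ≤ k → ∀ x ∈ K,
              ‖p.eval x‖ * Real.exp (-Q' x) ^ k ≤
                (C * (1 + ε) ^ k) *
                  Real.sqrt (∫ w in K, ‖p.eval w‖ ^ 2 * Real.exp (-Q' w) ^ (2 * k) ∂ν) := by
            intro p hdeg x hx
            have h1 := hp k hk p hdeg x hx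
            rw [hQ'eq x hx]
            have hint : (∫ w in K, ‖p.eval w‖ ^ 2 * Real.exp (-Q' w) ^ (2 * k) ∂ν)
                = ∫ w in K, ‖p.eval w‖ ^ 2 * Real.exp (-Q w) ^ (2 * k) ∂ν :=
              setIntegral_congr_fun hKm fun w hw => by rw [hQ'eq w hw]
            rw [hint]
            exact h1
          have hlower := core_lower K hK ν hν Q' hQ'm m hm k (C * (1 + ε) ^ k) hD hBMk
          have hSnn := Sk_nonneg K Q' k
          have h2 := rpow_calc2 (sSup (Ffun Q' k '' {z : Fin (k + 1) → ℂ | ∀ i, z i ∈ K}))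
            (ZkQ K ν Q' k) C ε hSnn (by rw [← hZc k]; exact hZnn k) hC hε k hk hlower
          simp only [hh, hu]
          rw [hZc k, hδc k, deltakQ_eq_Sfn]
          exact h2
        have hth : Tendsto h atTop (nhds (L ^ (1:ℝ) / (C ^ (0:ℝ) * (1 + ε) ^ (2:ℝ)))) := by
          have h1 : Tendsto (fun k : ℕ => deltakQ K Q k ^ (((k : ℝ) + 1) / (k : ℝ))) atTop
              (nhds (L ^ (1:ℝ))) := hδ.rpow tend1 (Or.inr one_pos)
          have h2 : Tendsto (fun k : ℕ => C ^ ((2 * ((k : ℝ) + 1)) / (k : ℝ) ^ 2)) atTop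
              (nhds (C ^ (0:ℝ))) := ((tendsto_const_nhds : Tendsto (fun _ : ℕ => C) atTop (nhds C)).rpow tend3 (Or.inl hC.ne'))
          have h3 : Tendsto (fun k : ℕ => (1 + ε) ^ ((2 * ((k : ℝ) + 1)) / (k : ℝ))) atTop
              (nhds ((1 + ε) ^ (2:ℝ))) := ((tendsto_const_nhds : Tendsto (fun _ : ℕ => (1+ε)) atTop (nhds (1+ε))).rpow tend4 (Or.inl hεp.ne'))
          exact h1.div (h2.mul h3) (by positivity)
        rw [Real.rpow_one, Real.rpow_zero, one_mul] at hth
        have h4 : liminf h atTop ≤ liminf u atTop := by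
          refine liminf_le_liminf ?_ hth.isBoundedUnder_ge hbddle.isCobounded_flip
          filter_upwards [eventually_ge_atTop 1] with k hk
          exact hlb k hk
        rwa [hth.liminf_eq] at h4
      have hT : Tendsto (fun ε : ℝ => L / (1 + ε) ^ (2:ℝ)) (nhdsWithin 0 (Set.Ioi 0))
          (nhds L) := by
        have hcont : ContinuousAt (fun ε : ℝ => L / (1 + ε) ^ (2:ℝ)) 0 := by
          refine ContinuousAt.div continuousAt_const ?_ (by norm_num [Real.one_rpow])
          refine ContinuousAt.rpow_const ?_ (Or.inl (by norm_num))
          exact (continuous_const.add continuous_id).continuousAt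
        have := hcont.tendsto
        simp only [add_zero, Real.one_rpow, div_one] at this
        exact this.mono_left nhdsWithin_le_nhds
      refine le_of_tendsto hT ?_
      filter_upwards [eventually_mem_nhdsWithin] with ε hε
      exact hc ε hε
    exact tendsto_of_le_liminf_of_limsup_le hliminf hlimsup hbddle hbddge
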